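/- Let X be a real Banach space with a normalized 1-symmetric basis (e_n), and let r_n = Σ_{k=0}^{2^n − 1} (−1)^k χ_{(k/2^n,(k+1)/2^n)} be the n-th Rademacher function on (0,1). Then ‖r_n‖_{JF_X} = 2^{−n} · ‖Σ_{i=1}^{2^n} e_i‖_X. -/

import Mathlib

open MeasureTheory

noncomputable section

/-- `e` is a normalized 1-symmetric (Schauder) basis of `X`: each `e n` has norm one,
its linear span is dense, and the norm of finite linear combinations is invariant under
permutations of the indices and changes of signs of the coefficients. -/
def IsSymmetricBasis {X : Type*} [NormedAddCommGroup X] [NormedSpace ℝ X] (e : ℕ → X) : Prop :=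
  (∀ n, ‖e n‖ = 1) ∧
  Dense (Submodule.span ℝ (Set.range e) : Set X) ∧
  ∀ (a : ℕ →₀ ℝ) (π : Equiv.Perm ℕ) (ε : ℕ → ℝ), (∀ n, ε n = 1 ∨ ε n = -1) →
    ‖a.sum fun n c => (ε n * c) • e (π n)‖ = ‖a.sum fun n c => c • e n‖

/-- The `JF_X` norm of an integrable function on `(0,1)`: the supremum of
`‖Σ_j (∫_{I_j} f dμ) e_j‖_X` over all finite families of pairwise disjoint open
subintervals of `(0,1)`. -/
def JFNorm1 {X : Type*} [NormedAddCommGroup X] [NormedSpace ℝ X]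
    (e : ℕ → X) (f : ℝ → ℝ) : ℝ :=
  sSup { r | ∃ (m : ℕ) (a b : Fin m → ℝ),
    (∀ j, 0 ≤ a j ∧ a j < b j ∧ b j ≤ 1) ∧
    (Pairwise fun i j => Disjoint (Set.Ioo (a i) (b i)) (Set.Ioo (a j) (b j))) ∧
    r = ‖∑ j : Fin m, (∫ x in Set.Ioo (a j) (b j), f x) • e (j : ℕ)‖ }

/-- The Rademacher functions `r_n = Σ_{k=0}^{2^n-1} (-1)^k χ_{(k/2^n,(k+1)/2^n)}`. -/
def rademacher (n : ℕ) : ℝ → ℝ := fun x =>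
  ∑ k ∈ Finset.range (2 ^ n),
    (-1 : ℝ) ^ k *
      Set.indicator (Set.Ioo ((k : ℝ) / 2 ^ n) (((k : ℝ) + 1) / 2 ^ n)) (fun _ => (1 : ℝ)) x


namespace JFaux

lemma sum_range_two_mul {M : Type*} [AddCommMonoid M] (m : ℕ) (g : ℕ → M) :
    ∑ k ∈ Finset.range (2*m), g k = ∑ j ∈ Finset.range m, (g (2*j) + g (2*j+1)) := by
  induction m with
  | zero => simp
  | succ m ih =>
    rw [Finset.sum_range_succ, ← ih, Nat.mul_succ, Finset.sum_range_succ, Finset.sum_range_succ,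
      add_assoc]

noncomputable def clampf (a b x : ℝ) : ℝ := max a (min b x)

lemma clamp3_le (a b x s : ℝ) (hab : a ≤ b) (hs : 0 ≤ s) :
    2 * clampf a b (x+s) - clampf a b x - clampf a b (x+2*s) ≤ s := by
  unfold clampf; simp only [max_def, min_def]; split_ifs <;> linarith

lemma clamp3_ge (a b x s : ℝ) (hab : a ≤ b) (hs : 0 ≤ s) :
    -s ≤ 2 * clampf a b (x+s) - clampf a b x - clampf a b (x+2*s) := by
  unfold clampf; simp only [max_def, min_def]; split_ifs <;> linarith

lemma clamp3_zero₁ (a b x s : ℝ) (hab : a ≤ b) (hs : 0 ≤ s) (h : b ≤ x) :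
    2 * clampf a b (x+s) - clampf a b x - clampf a b (x+2*s) = 0 := by
  unfold clampf; simp only [max_def, min_def]; split_ifs <;> linarith

lemma clamp3_zero₂ (a b x s : ℝ) (hab : a ≤ b) (hs : 0 ≤ s) (h : x + 2*s ≤ a) :
    2 * clampf a b (x+s) - clampf a b x - clampf a b (x+2*s) = 0 := by
  unfold clampf; simp only [max_def, min_def]; split_ifs <;> linarith

lemma clamp3_zero₃ (a b x s : ℝ) (hab : a ≤ b) (hs : 0 ≤ s) (h1 : a ≤ x) (h2 : x + 2*s ≤ b) :
    2 * clampf a b (x+s) - clampf a b x - clampf a b (x+2*s) = 0 := by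
  unfold clampf; simp only [max_def, min_def]; split_ifs <;> linarith

lemma clamp3_nonneg (a b x s : ℝ) (hab : a ≤ b) (hs : 0 ≤ s) (h : a ≤ x) :
    0 ≤ 2 * clampf a b (x+s) - clampf a b x - clampf a b (x+2*s) := by
  unfold clampf; simp only [max_def, min_def]; split_ifs <;> linarith

lemma clamp3_nonpos (a b x s : ℝ) (hab : a ≤ b) (hs : 0 ≤ s) (h : x + 2*s ≤ b) :
    2 * clampf a b (x+s) - clampf a b x - clampf a b (x+2*s) ≤ 0 := by
  unfold clampf; simp only [max_def, min_def]; split_ifs <;> linarith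

lemma abs_pairsum_le (M : ℕ) (a b s : ℝ) (hab : a ≤ b) (hs : 0 < s) :
    |∑ j ∈ Finset.range M,
      (2 * clampf a b (2*(j:ℝ)*s+s) - clampf a b (2*(j:ℝ)*s) - clampf a b (2*(j:ℝ)*s+2*s))| ≤ s := by
  classical
  set P : ℕ → ℝ := fun j =>
    2 * clampf a b (2*(j:ℝ)*s+s) - clampf a b (2*(j:ℝ)*s) - clampf a b (2*(j:ℝ)*s+2*s) with hP
  set A : ℕ → Prop := fun j => 2*(j:ℝ)*s < a ∧ a < 2*(j:ℝ)*s + 2*s with hA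
  set B : ℕ → Prop := fun j => 2*(j:ℝ)*s < b ∧ b < 2*(j:ℝ)*s + 2*s with hB
  have hs' : 0 ≤ s := hs.le
  have hP0 : ∀ j, ¬ A j → ¬ B j → P j = 0 := by
    intro j hAj hBj
    simp only [hA, hB, not_and_or, not_lt] at hAj hBj
    rcases hAj with h1 | h1
    · rcases hBj with h2 | h2
      · exact clamp3_zero₁ a b _ s hab hs' (by linarith)
      · exact clamp3_zero₃ a b _ s hab hs' h1 h2
    · exact clamp3_zero₂ a b _ s hab hs' h1
  have hAnB : ∀ j, A j → ¬ B j → P j ≤ 0 := by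
    intro j hAj hBj
    simp only [hB, not_and_or, not_lt] at hBj
    obtain ⟨ha1, ha2⟩ := hAj
    rcases hBj with h2 | h2
    · linarith
    · exact clamp3_nonpos a b _ s hab hs' h2
  have hBnA : ∀ j, B j → ¬ A j → 0 ≤ P j := by
    intro j hBj hAj
    simp only [hA, not_and_or, not_lt] at hAj
    obtain ⟨hb1, hb2⟩ := hBj
    rcases hAj with h2 | h2
    · exact clamp3_nonneg a b _ s hab hs' h2
    · linarith
  have key : ∀ (C : ℕ → Prop) (c : ℝ), (∀ j, C j → (2*(j:ℝ)*s < c ∧ c < 2*(j:ℝ)*s + 2*s)) →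
      ∀ j j', C j → C j' → j = j' := by
    intro C c hC j j' hj hj'
    by_contra hne
    rcases Nat.lt_or_ge j j' with h | h
    · have hj1 : (j:ℝ) + 1 ≤ (j':ℝ) := by exact_mod_cast h
      have := (hC j hj).2
      have := (hC j' hj').1
      nlinarith
    · rcases Nat.lt_or_ge j' j with h' | h'
      · have hj1 : (j':ℝ) + 1 ≤ (j:ℝ) := by exact_mod_cast h'
        have := (hC j' hj').2
        have := (hC j hj).1
        nlinarith
      · exact hne (le_antisymm h h').symm
  have hA1 : ∀ j j', A j → A j' → j = j' := key A a (fun j h => h)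
  have hB1 : ∀ j j', B j → B j' → j = j' := key B b (fun j h => h)
  have hPle : ∀ j, P j ≤ s := fun j => clamp3_le a b _ s hab hs'
  have hPge : ∀ j, -s ≤ P j := fun j => clamp3_ge a b _ s hab hs'
  have singleton_sum : ∀ (S : Finset ℕ) (C : ℕ → Prop), (∀ j ∈ S, C j) →
      (∀ j j', C j → C j' → j = j') →
      (-s ≤ ∑ j ∈ S, P j) ∧ (∑ j ∈ S, P j ≤ s) := by
    intro S C hmem hC1
    rcases S.eq_empty_or_nonempty with h | ⟨j, hj⟩
    · rw [h]; simp [hs.le, neg_nonpos.mpr hs.le]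
    · have : S = {j} := by
        apply Finset.eq_singleton_iff_unique_mem.mpr
        exact ⟨hj, fun x hx => hC1 x j (hmem x hx) (hmem j hj)⟩
      rw [this, Finset.sum_singleton]
      exact ⟨hPge j, hPle j⟩
  rw [abs_le]
  constructor
  · -- lower bound: split on A
    rw [← Finset.sum_filter_add_sum_filter_not (Finset.range M) (fun j => A j) P]
    have h1 : -s ≤ ∑ j ∈ (Finset.range M).filter (fun j => A j), P j :=
      (singleton_sum _ A (fun j hj => (Finset.mem_filter.mp hj).2) hA1).1
    have h2 : 0 ≤ ∑ j ∈ (Finset.range M).filter (fun j => ¬ A j), P j := by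
      apply Finset.sum_nonneg
      intro j hj
      have hnA : ¬ A j := (Finset.mem_filter.mp hj).2
      by_cases hBj : B j
      · exact hBnA j hBj hnA
      · exact (hP0 j hnA hBj).ge
    exact le_trans h1 (le_add_of_nonneg_right h2)
  · rw [← Finset.sum_filter_add_sum_filter_not (Finset.range M) (fun j => B j) P]
    have h1 : ∑ j ∈ (Finset.range M).filter (fun j => B j), P j ≤ s :=
      (singleton_sum _ B (fun j hj => (Finset.mem_filter.mp hj).2) hB1).2
    have h2 : ∑ j ∈ (Finset.range M).filter (fun j => ¬ B j), P j ≤ 0 := by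
      apply Finset.sum_nonpos
      intro j hj
      have hnB : ¬ B j := (Finset.mem_filter.mp hj).2
      by_cases hAj : A j
      · exact hAnB j hAj hnB
      · exact (hP0 j hAj hnB).le
    exact le_trans (add_le_add h1 h2) (by linarith)

lemma clampf_def (a b x : ℝ) : clampf a b x = max a (min b x) := rfl

lemma altsum_bound (n : ℕ) (a b : ℝ) (h0 : 0 ≤ a) (hab : a ≤ b) (hb1 : b ≤ 1) :
    |∑ k ∈ Finset.range (2^n),
      (-1:ℝ)^k * (clampf a b (((k:ℝ)+1)/2^n) - clampf a b ((k:ℝ)/2^n))| ≤ ((2:ℝ)^n)⁻¹ := by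
  cases n with
  | zero =>
    simp only [pow_zero, Finset.range_one, Finset.sum_singleton, Nat.cast_zero, zero_add,
      div_one, zero_div]
    have e1 : clampf a b 1 = b := by
      rw [clampf_def, min_eq_left hb1, max_eq_right hab]
    have e2 : clampf a b 0 = a := by
      rw [clampf_def, min_eq_right (by linarith : (0:ℝ) ≤ b), max_eq_left h0]
    rw [e1, e2, one_mul, abs_of_nonneg (by linarith)]
    linarith
  | succ m =>
    have h2 : (2:ℕ)^(m+1) = 2 * 2^m := by ring
    rw [h2, sum_range_two_mul]
    set s : ℝ := ((2:ℝ)^(m+1))⁻¹ with hs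
    have hspos : 0 < s := by positivity
    have hT : ((2:ℝ)^(m+1)) ≠ 0 := by positivity
    have hcongr : ∀ j ∈ Finset.range (2^m),
        ((-1:ℝ)^(2*j) * (clampf a b ((((2*j:ℕ):ℝ)+1)/(2:ℝ)^(m+1)) - clampf a b (((2*j:ℕ):ℝ)/(2:ℝ)^(m+1)))
        + (-1:ℝ)^(2*j+1) * (clampf a b ((((2*j+1:ℕ):ℝ)+1)/(2:ℝ)^(m+1)) - clampf a b (((2*j+1:ℕ):ℝ)/(2:ℝ)^(m+1))))
        = 2 * clampf a b (2*(j:ℝ)*s+s) - clampf a b (2*(j:ℝ)*s) - clampf a b (2*(j:ℝ)*s+2*s) := by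
      intro j _
      have s1 : (-1:ℝ)^(2*j) = 1 := by rw [pow_mul]; norm_num
      have s2 : (-1:ℝ)^(2*j+1) = -1 := by rw [pow_succ, s1, one_mul]
      have c1 : (((2*j:ℕ):ℝ))/(2:ℝ)^(m+1) = 2*(j:ℝ)*s := by
        rw [hs]; push_cast; field_simp
      have c2 : ((((2*j:ℕ):ℝ))+1)/(2:ℝ)^(m+1) = 2*(j:ℝ)*s + s := by
        rw [hs]; push_cast; field_simp
      have c3 : (((2*j+1:ℕ):ℝ))/(2:ℝ)^(m+1) = 2*(j:ℝ)*s + s := by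
        rw [hs]; push_cast; field_simp
      have c4 : ((((2*j+1:ℕ):ℝ))+1)/(2:ℝ)^(m+1) = 2*(j:ℝ)*s + 2*s := by
        rw [hs]; push_cast; field_simp; ring
      rw [s1, s2, c1, c2, c3, c4]; ring
    rw [Finset.sum_congr rfl hcongr]
    exact abs_pairsum_le (2^m) a b s hab hspos

lemma len_eq (a b p q : ℝ) (hab : a ≤ b) (hpq : p ≤ q) :
    max 0 (min b q - max a p) = clampf a b q - clampf a b p := by
  unfold clampf; simp only [max_def, min_def]; split_ifs <;> linarith

lemma clampf_mono (a b : ℝ) {x y : ℝ} (h : x ≤ y) : clampf a b x ≤ clampf a b y :=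
  max_le_max le_rfl (min_le_min le_rfl h)

lemma integral_rademacher (n : ℕ) (a b : ℝ) (hab : a ≤ b) :
    ∫ x in Set.Ioo a b, rademacher n x =
      ∑ k ∈ Finset.range (2^n),
        (-1:ℝ)^k * (clampf a b (((k:ℝ)+1)/2^n) - clampf a b ((k:ℝ)/2^n)) := by
  unfold rademacher
  rw [integral_finset_sum]
  · apply Finset.sum_congr rfl
    intro k _
    rw [integral_const_mul, setIntegral_indicator measurableSet_Ioo]
    rw [setIntegral_const, smul_eq_mul, mul_one]
    rw [Set.Ioo_inter_Ioo, Real.volume_real_Ioo, max_comm]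
    congr 1
    exact len_eq a b _ _ hab (by gcongr; linarith)
  · intro k _
    apply Integrable.const_mul
    rw [integrable_indicator_iff measurableSet_Ioo]
    exact (integrableOn_const (ne_of_lt (lt_of_le_of_lt
      (Measure.restrict_apply_le _ _) measure_Ioo_lt_top)))

lemma altsum_le_len (n : ℕ) (a b : ℝ) (h0 : 0 ≤ a) (hab : a ≤ b) (hb1 : b ≤ 1) :
    |∑ k ∈ Finset.range (2^n),
      (-1:ℝ)^k * (clampf a b (((k:ℝ)+1)/2^n) - clampf a b ((k:ℝ)/2^n))| ≤ b - a := by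
  have key : ∑ k ∈ Finset.range (2^n),
      |(-1:ℝ)^k * (clampf a b (((k:ℝ)+1)/2^n) - clampf a b ((k:ℝ)/2^n))|
      = b - a := by
    have congr1 : ∀ k ∈ Finset.range (2^n),
        |(-1:ℝ)^k * (clampf a b (((k:ℝ)+1)/2^n) - clampf a b ((k:ℝ)/2^n))|
        = clampf a b ((((k+1):ℕ):ℝ)/2^n) - clampf a b ((k:ℝ)/2^n) := by
      intro k _
      rw [abs_mul, abs_pow, abs_neg, abs_one, one_pow, one_mul]
      rw [abs_of_nonneg (by
        have : ((k:ℝ))/2^n ≤ ((k:ℝ)+1)/2^n := by gcongr; linarith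
        linarith [clampf_mono a b this])]
      push_cast
      ring_nf
    rw [Finset.sum_congr rfl congr1,
      Finset.sum_range_sub (fun k => clampf a b ((k:ℝ)/2^n))]
    have e1 : clampf a b (((2^n:ℕ):ℝ)/2^n) = b := by
      rw [show ((2^n:ℕ):ℝ)/2^n = 1 by push_cast; field_simp]
      rw [clampf, min_eq_left hb1, max_eq_right hab]
    have e2 : clampf a b (((0:ℕ):ℝ)/2^n) = a := by
      rw [show ((0:ℕ):ℝ)/2^n = 0 by push_cast; simp]
      rw [clampf, min_eq_right (by linarith : (0:ℝ) ≤ b), max_eq_left h0]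
    rw [e1, e2]
  calc |∑ k ∈ Finset.range (2^n),
      (-1:ℝ)^k * (clampf a b (((k:ℝ)+1)/2^n) - clampf a b ((k:ℝ)/2^n))|
      ≤ ∑ k ∈ Finset.range (2^n),
        |(-1:ℝ)^k * (clampf a b (((k:ℝ)+1)/2^n) - clampf a b ((k:ℝ)/2^n))| :=
      Finset.abs_sum_le_sum_abs _ _
    _ = b - a := key

lemma clampf_left {a b x : ℝ} (h : x ≤ a) (hab : a ≤ b) : clampf a b x = a := by
  unfold clampf; simp only [max_def, min_def]; split_ifs <;> linarith

lemma clampf_right {a b x : ℝ} (h : b ≤ x) (hab : a ≤ b) : clampf a b x = b := by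
  unfold clampf; simp only [max_def, min_def]; split_ifs <;> linarith

lemma integral_rademacher_dyadic (n j : ℕ) (hj : j < 2^n) :
    ∫ x in Set.Ioo ((j:ℝ)/2^n) (((j:ℝ)+1)/2^n), rademacher n x
      = (-1:ℝ)^j * ((2:ℝ)^n)⁻¹ := by
  have hT : (0:ℝ) < (2:ℝ)^n := by positivity
  set a : ℝ := (j:ℝ)/2^n with ha
  set b : ℝ := ((j:ℝ)+1)/2^n with hb
  have hab : a ≤ b := by rw [ha, hb]; gcongr; linarith
  rw [integral_rademacher n a b hab]
  rw [Finset.sum_eq_single j]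
  · have e1 : clampf a b ((j:ℝ)/2^n) = a := clampf_left (le_of_eq ha.symm) hab
    have e2 : clampf a b (((j:ℝ)+1)/2^n) = b := clampf_right (le_of_eq hb) hab
    rw [e1, e2, ha, hb]
    congr 1
    field_simp
    ring
  · intro k hk hkj
    rcases Nat.lt_or_ge k j with h | h
    · have h1 : ((k:ℝ)+1)/2^n ≤ a := by
        rw [ha]; gcongr
        have : (k:ℝ) + 1 ≤ (j:ℝ) := by exact_mod_cast h
        linarith
      have h2 : (k:ℝ)/2^n ≤ a := le_trans (by gcongr; linarith) h1
      rw [clampf_left h1 hab, clampf_left h2 hab, sub_self, mul_zero]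
    · have h' : j + 1 ≤ k := lt_of_le_of_ne h (Ne.symm hkj) 
      have h1 : b ≤ (k:ℝ)/2^n := by
        rw [hb]; gcongr
        have : (j:ℝ) + 1 ≤ (k:ℝ) := by exact_mod_cast h'
        linarith
      have h2 : b ≤ ((k:ℝ)+1)/2^n := le_trans h1 (by gcongr; linarith)
      rw [clampf_right h1 hab, clampf_right h2 hab, sub_self, mul_zero]
  · intro h
    exact absurd (Finset.mem_range.mpr hj) h

section Sym
variable {X : Type*} [NormedAddCommGroup X] [NormedSpace ℝ X] {e : ℕ → X}

lemma sym_norm_eq (he : IsSymmetricBasis e) (m : ℕ) (c : ℕ → ℝ) (π : Equiv.Perm ℕ)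
    (ε : ℕ → ℝ) (hε : ∀ n, ε n = 1 ∨ ε n = -1) :
    ‖∑ j ∈ Finset.range m, (ε j * c j) • e (π j)‖ = ‖∑ j ∈ Finset.range m, c j • e j‖ := by
  classical
  set c' : ℕ → ℝ := fun j => if j ∈ Finset.range m then c j else 0 with hc'
  have hsupp : ∀ j, c' j ≠ 0 → j ∈ Finset.range m := by
    intro j h
    by_contra hn
    simp [hc', hn] at h
    exact hn (Finset.mem_range.mpr h.1)
  set a : ℕ →₀ ℝ := Finsupp.onFinset (Finset.range m) c' hsupp with ha
  have h1 : (a.sum fun n c => c • e n) = ∑ j ∈ Finset.range m, c j • e j := by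
    rw [ha, Finsupp.onFinset_sum hsupp (fun j => zero_smul ℝ (e j))]
    apply Finset.sum_congr rfl
    intro j hj
    rw [hc']
    simp [hj]
  have h2 : (a.sum fun n cc => (ε n * cc) • e (π n))
      = ∑ j ∈ Finset.range m, (ε j * c j) • e (π j) := by
    rw [ha, Finsupp.onFinset_sum hsupp (fun j => by rw [mul_zero, zero_smul])]
    apply Finset.sum_congr rfl
    intro j hj
    rw [hc']
    simp [hj]
  rw [← h1, ← h2, he.2.2 a π ε hε]

lemma sym_sign (he : IsSymmetricBasis e) (m : ℕ) (c : ℕ → ℝ) (ε : ℕ → ℝ)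
    (hε : ∀ n, ε n = 1 ∨ ε n = -1) :
    ‖∑ j ∈ Finset.range m, (ε j * c j) • e j‖ = ‖∑ j ∈ Finset.range m, c j • e j‖ := by
  simpa using sym_norm_eq he m c (Equiv.refl ℕ) ε hε

lemma sym_perm (he : IsSymmetricBasis e) (m : ℕ) (c : ℕ → ℝ) (π : Equiv.Perm ℕ) :
    ‖∑ j ∈ Finset.range m, c j • e (π j)‖ = ‖∑ j ∈ Finset.range m, c j • e j‖ := by
  have := sym_norm_eq he m c π (fun _ => 1) (fun _ => Or.inl rfl)
  simpa using this

lemma sym_abs (he : IsSymmetricBasis e) (m : ℕ) (c : ℕ → ℝ) :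
    ‖∑ j ∈ Finset.range m, c j • e j‖ = ‖∑ j ∈ Finset.range m, |c j| • e j‖ := by
  classical
  have := sym_sign he m (fun j => |c j|) (fun j => if c j < 0 then -1 else 1)
    (fun j => by by_cases h : c j < 0 <;> simp [h])
  rw [← this]
  apply congrArg
  apply Finset.sum_congr rfl
  intro j _
  congr 1
  by_cases h : c j < 0
  · rw [if_pos h, abs_of_neg h]; ring
  · rw [if_neg h, abs_of_nonneg (le_of_not_gt h)]; ring

lemma exists_perm_image (S : Finset ℕ) :
    ∃ π : Equiv.Perm ℕ, Finset.image (fun i => π i) (Finset.range S.card) = S := by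
  classical
  haveI hinf1 : Infinite {x : ℕ // ¬ x ∈ Finset.range S.card} := by
    haveI := ((Finset.range S.card).finite_toSet.infinite_compl).to_subtype
    exact Infinite.of_injective
      (fun p : ((↑(Finset.range S.card) : Set ℕ)ᶜ : Set ℕ) =>
        (⟨p.1, p.2⟩ : {x : ℕ // ¬ x ∈ Finset.range S.card}))
      (fun p q h => Subtype.ext (congrArg Subtype.val h))
  haveI hinf2 : Infinite {x : ℕ // ¬ x ∈ S} := by
    haveI := (S.finite_toSet.infinite_compl).to_subtype
    exact Infinite.of_injective
      (fun p : ((↑S : Set ℕ)ᶜ : Set ℕ) => (⟨p.1, p.2⟩ : {x : ℕ // ¬ x ∈ S}))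
      (fun p q h => Subtype.ext (congrArg Subtype.val h))
  haveI d1 : Denumerable {x : ℕ // ¬ x ∈ Finset.range S.card} :=
    Denumerable.ofEncodableOfInfinite _
  haveI d2 : Denumerable {x : ℕ // ¬ x ∈ S} := Denumerable.ofEncodableOfInfinite _
  have hcard : Fintype.card {x : ℕ // x ∈ Finset.range S.card}
      = Fintype.card {x : ℕ // x ∈ S} := by
    rw [Fintype.card_coe, Fintype.card_coe, Finset.card_range]
  let ep : {x : ℕ // x ∈ Finset.range S.card} ≃ {x : ℕ // x ∈ S} :=
    Fintype.equivOfCardEq hcard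
  let en : {x : ℕ // ¬ x ∈ Finset.range S.card} ≃ {x : ℕ // ¬ x ∈ S} :=
    (Denumerable.eqv _).trans (Denumerable.eqv _).symm
  refine ⟨Equiv.subtypeCongr ep en, ?_⟩
  have happly : ∀ i (h : i ∈ Finset.range S.card),
      Equiv.subtypeCongr ep en i = (ep ⟨i, h⟩ : ℕ) := by
    intro i h
    simp [Equiv.subtypeCongr, h]
  apply Finset.eq_of_subset_of_card_le
  · intro x hx
    obtain ⟨i, hi, rfl⟩ := Finset.mem_image.mp hx
    rw [happly i hi]
    exact (ep ⟨i, hi⟩).2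
  · rw [Finset.card_image_of_injective _ (Equiv.injective _), Finset.card_range]

lemma sym_finset (he : IsSymmetricBasis e) (S : Finset ℕ) :
    ‖∑ j ∈ S, e j‖ = ‖∑ i ∈ Finset.range S.card, e i‖ := by
  obtain ⟨π, hπ⟩ := exists_perm_image S
  conv_lhs => rw [← hπ]
  rw [Finset.sum_image (fun x _ y _ h => π.injective h)]
  have := sym_perm he S.card (fun _ => (1:ℝ)) π
  simpa using this

lemma sym_partial_mono (he : IsSymmetricBasis e) {k N : ℕ} (h : k ≤ N) :
    ‖∑ i ∈ Finset.range k, e i‖ ≤ ‖∑ i ∈ Finset.range N, e i‖ := by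
  classical
  set ε : ℕ → ℝ := fun i => if i < k then 1 else -1 with hε
  have hsplit : ∑ i ∈ Finset.range N, e i + ∑ i ∈ Finset.range N, (ε i * 1) • e i
      = (2:ℝ) • ∑ i ∈ Finset.range k, e i := by
    have h1 : ∀ i ∈ Finset.range N,
        e i + (ε i * 1) • e i = (if i < k then (2:ℝ) else 0) • e i := by
      intro i _
      by_cases hc : i < k
      · rw [hε]; simp only [if_pos hc, one_mul, one_smul, two_smul]
      · rw [hε]; simp only [if_neg hc, neg_one_mul, neg_smul, one_smul, zero_smul,
          add_neg_cancel]
    rw [← Finset.sum_add_distrib, Finset.sum_congr rfl h1,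
      ← Finset.sum_subset (Finset.range_subset_range.mpr h)
        (fun i _ hi => by
          rw [if_neg (fun hc => hi (Finset.mem_range.mpr hc)), zero_smul]),
      Finset.sum_congr rfl (fun i hi => by rw [if_pos (Finset.mem_range.mp hi)]),
      Finset.smul_sum]
  have hnorm : ‖∑ i ∈ Finset.range N, (ε i * 1) • e i‖ = ‖∑ i ∈ Finset.range N, e i‖ := by
    have := sym_sign he N (fun _ => (1:ℝ)) ε
      (fun i => by rw [hε]; by_cases hc : i < k <;> simp [hc])
    simpa using this
  have h2 : (2:ℝ) * ‖∑ i ∈ Finset.range k, e i‖ ≤ 2 * ‖∑ i ∈ Finset.range N, e i‖ := by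
    calc (2:ℝ) * ‖∑ i ∈ Finset.range k, e i‖ = ‖(2:ℝ) • ∑ i ∈ Finset.range k, e i‖ := by
          rw [norm_smul]; simp
      _ = ‖∑ i ∈ Finset.range N, e i + ∑ i ∈ Finset.range N, (ε i * 1) • e i‖ := by
          rw [hsplit]
      _ ≤ ‖∑ i ∈ Finset.range N, e i‖ + ‖∑ i ∈ Finset.range N, (ε i * 1) • e i‖ :=
          norm_add_le _ _
      _ = 2 * ‖∑ i ∈ Finset.range N, e i‖ := by rw [hnorm]; ring
  linarith

lemma sum_update_one {m j0 : ℕ} (h0 : j0 ∈ Finset.range m) (c : ℕ → ℝ) (v : ℝ) :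
    ∑ j ∈ Finset.range m, Function.update c j0 v j
      = ∑ j ∈ Finset.range m, c j + v - c j0 := by
  classical
  rw [Finset.sum_update_of_mem h0, ← Finset.erase_eq, ← Finset.add_sum_erase _ c h0]
  ring

lemma sum_update_two {m j0 j1 : ℕ} (h01 : j0 ≠ j1) (h0 : j0 ∈ Finset.range m)
    (h1 : j1 ∈ Finset.range m) (c : ℕ → ℝ) (v w : ℝ) :
    ∑ j ∈ Finset.range m, Function.update (Function.update c j0 v) j1 w j
      = ∑ j ∈ Finset.range m, c j + v + w - c j0 - c j1 := by
  classical
  rw [sum_update_one h1, sum_update_one h0, Function.update_of_ne (Ne.symm h01)]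
  ring

lemma keyD (he : IsSymmetricBasis e) (N m : ℕ) (t : ℝ) (ht : 0 < t) :
    ∀ (k : ℕ) (c : ℕ → ℝ),
      ((Finset.range m).filter (fun j => c j ≠ 0 ∧ c j ≠ t)).card ≤ k →
      (∀ j, 0 ≤ c j) → (∀ j, c j ≤ t) →
      (∑ j ∈ Finset.range m, c j) ≤ N * t →
      ‖∑ j ∈ Finset.range m, c j • e j‖ ≤ t * ‖∑ i ∈ Finset.range N, e i‖ := by
  classical
  intro k
  induction k with
  | zero =>
    intro c hcard h0 h1 hsum
    have hall : ∀ j ∈ Finset.range m, c j = 0 ∨ c j = t := by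
      intro j hj
      by_contra hc
      push_neg at hc
      have hmem : j ∈ (Finset.range m).filter (fun j => c j ≠ 0 ∧ c j ≠ t) :=
        Finset.mem_filter.mpr ⟨hj, hc⟩
      have := Finset.card_pos.mpr ⟨j, hmem⟩
      omega
    set S := (Finset.range m).filter (fun j => c j ≠ 0) with hS
    have hSt : ∀ j ∈ S, c j = t := by
      intro j hj
      rw [hS, Finset.mem_filter] at hj
      exact (hall j hj.1).resolve_left hj.2
    have hzero : ∀ j ∈ Finset.range m, j ∉ S → c j • e j = 0 := by
      intro j hj hjS
      have : ¬ c j ≠ 0 := fun h => hjS (by rw [hS]; exact Finset.mem_filter.mpr ⟨hj, h⟩)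
      rw [not_not.mp this, zero_smul]
    have hzero' : ∀ j ∈ Finset.range m, j ∉ S → c j = 0 := by
      intro j hj hjS
      have : ¬ c j ≠ 0 := fun h => hjS (by rw [hS]; exact Finset.mem_filter.mpr ⟨hj, h⟩)
      exact not_not.mp this
    have hsum2 : ∑ j ∈ Finset.range m, c j = S.card * t := by
      rw [← Finset.sum_subset (Finset.filter_subset _ _) hzero']
      rw [Finset.sum_congr rfl hSt, Finset.sum_const, nsmul_eq_mul]
    have hcardN : S.card ≤ N := by
      rw [hsum2] at hsum
      by_contra hc
      push_neg at hc
      have : (N:ℝ) < (S.card:ℝ) := by exact_mod_cast hc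
      nlinarith
    have hvec : ∑ j ∈ Finset.range m, c j • e j = t • ∑ j ∈ S, e j := by
      rw [← Finset.sum_subset (Finset.filter_subset _ _) hzero, Finset.smul_sum]
      exact Finset.sum_congr rfl (fun j hj => by rw [hSt j hj])
    rw [hvec, norm_smul, Real.norm_eq_abs, abs_of_pos ht, sym_finset he S]
    exact mul_le_mul_of_nonneg_left (sym_partial_mono he hcardN) ht.le
  | succ k ih =>
    intro c hcard h0 h1 hsum
    by_cases hk : ((Finset.range m).filter (fun j => c j ≠ 0 ∧ c j ≠ t)).card ≤ k
    · exact ih c hk h0 h1 hsum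
    set F := (Finset.range m).filter (fun j => c j ≠ 0 ∧ c j ≠ t) with hF
    obtain ⟨j0, hj0F⟩ : F.Nonempty := Finset.card_pos.mp (by omega)
    have hj0m : j0 ∈ Finset.range m := (Finset.mem_filter.mp hj0F).1
    have hj0c : c j0 ≠ 0 ∧ c j0 ≠ t := (Finset.mem_filter.mp hj0F).2
    have hx0 : 0 < c j0 := (h0 j0).lt_of_ne (Ne.symm hj0c.1)
    have hx1 : c j0 < t := (h1 j0).lt_of_ne hj0c.2
    -- convex combination helper
    have combine : ∀ (c₁ c₂ : ℕ → ℝ) (lam : ℝ), 0 ≤ lam → lam ≤ 1 →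
        (∀ j, c j = lam * c₁ j + (1-lam) * c₂ j) →
        ‖∑ j ∈ Finset.range m, c₁ j • e j‖ ≤ t * ‖∑ i ∈ Finset.range N, e i‖ →
        ‖∑ j ∈ Finset.range m, c₂ j • e j‖ ≤ t * ‖∑ i ∈ Finset.range N, e i‖ →
        ‖∑ j ∈ Finset.range m, c j • e j‖ ≤ t * ‖∑ i ∈ Finset.range N, e i‖ := by
      intro c₁ c₂ lam hl0 hl1 hconv hb1 hb2
      have hv : ∑ j ∈ Finset.range m, c j • e j
          = lam • ∑ j ∈ Finset.range m, c₁ j • e j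
            + (1-lam) • ∑ j ∈ Finset.range m, c₂ j • e j := by
        rw [Finset.smul_sum, Finset.smul_sum, ← Finset.sum_add_distrib]
        apply Finset.sum_congr rfl
        intro j _
        rw [smul_smul, smul_smul, ← add_smul, ← hconv j]
      rw [hv]
      have hb := norm_add_le (lam • ∑ j ∈ Finset.range m, c₁ j • e j)
        ((1-lam) • ∑ j ∈ Finset.range m, c₂ j • e j)
      rw [norm_smul, norm_smul, Real.norm_eq_abs, Real.norm_eq_abs,
        abs_of_nonneg hl0, abs_of_nonneg (by linarith)] at hb
      nlinarith [norm_nonneg (∑ j ∈ Finset.range m, c₁ j • e j),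
        norm_nonneg (∑ j ∈ Finset.range m, c₂ j • e j)]
    -- card helper
    have cardle : ∀ (c' : ℕ → ℝ) (j' : ℕ), j' ∈ F →
        (∀ j, j ≠ j' → (c' j ≠ 0 ∧ c' j ≠ t) → (c j ≠ 0 ∧ c j ≠ t)) →
        (c' j' = 0 ∨ c' j' = t) →
        ((Finset.range m).filter (fun j => c' j ≠ 0 ∧ c' j ≠ t)).card ≤ k := by
      intro c' j' hj'F hpres hj'
      have hsub : (Finset.range m).filter (fun j => c' j ≠ 0 ∧ c' j ≠ t) ⊆ F.erase j' := by
        intro x hx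
        obtain ⟨hxm, hxc⟩ := Finset.mem_filter.mp hx
        have hne : x ≠ j' := by
          rintro rfl
          rcases hj' with h | h
          · exact hxc.1 h
          · exact hxc.2 h
        exact Finset.mem_erase.mpr ⟨hne, Finset.mem_filter.mpr ⟨hxm, hpres x hne hxc⟩⟩
      calc ((Finset.range m).filter (fun j => c' j ≠ 0 ∧ c' j ≠ t)).card
          ≤ (F.erase j').card := Finset.card_le_card hsub
        _ = F.card - 1 := Finset.card_erase_of_mem hj'F
        _ ≤ k := by omega
    by_cases hslack : (∑ j ∈ Finset.range m, c j) + (t - c j0) ≤ N * t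
    · -- move single coordinate
      set lam := c j0 / t with hlam
      set c₁ := Function.update c j0 t with hc₁
      set c₂ := Function.update c j0 0 with hc₂
      have hl0 : 0 ≤ lam := div_nonneg hx0.le ht.le
      have hl1 : lam ≤ 1 := (div_le_one ht).mpr hx1.le
      have hconv : ∀ j, c j = lam * c₁ j + (1-lam) * c₂ j := by
        intro j
        by_cases hj : j = j0
        · subst hj
          rw [hc₁, hc₂, Function.update_self, Function.update_self, hlam]
          field_simp
          ring
        · rw [hc₁, hc₂, Function.update_of_ne hj, Function.update_of_ne hj]
          ring
      apply combine c₁ c₂ lam hl0 hl1 hconv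
      · apply ih c₁
        · apply cardle c₁ j0 hj0F
          · intro j hj hc
            rwa [hc₁, Function.update_of_ne hj] at hc
          · right; rw [hc₁, Function.update_self]
        · intro j
          by_cases hj : j = j0
          · subst hj; rw [hc₁, Function.update_self]; exact ht.le
          · rw [hc₁, Function.update_of_ne hj]; exact h0 j
        · intro j
          by_cases hj : j = j0
          · subst hj; rw [hc₁, Function.update_self]
          · rw [hc₁, Function.update_of_ne hj]; exact h1 j
        · rw [hc₁, sum_update_one hj0m]
          linarith
      · apply ih c₂
        · apply cardle c₂ j0 hj0F
          · intro j hj hc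
            rwa [hc₂, Function.update_of_ne hj] at hc
          · left; rw [hc₂, Function.update_self]
        · intro j
          by_cases hj : j = j0
          · subst hj; rw [hc₂, Function.update_self]
          · rw [hc₂, Function.update_of_ne hj]; exact h0 j
        · intro j
          by_cases hj : j = j0
          · subst hj; rw [hc₂, Function.update_self]; exact ht.le
          · rw [hc₂, Function.update_of_ne hj]; exact h1 j
        · rw [hc₂, sum_update_one hj0m]
          linarith
    · -- need a second fractional coordinate
      have hex : ∃ j1, j1 ∈ Finset.range m ∧ j1 ≠ j0 ∧ (c j1 ≠ 0 ∧ c j1 ≠ t) := by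
        by_contra hcon
        push_neg at hcon
        set K := ((Finset.range m).erase j0).filter (fun j => c j ≠ 0) with hK
        have hKt : ∀ j ∈ K, c j = t := by
          intro j hj
          rw [hK, Finset.mem_filter, Finset.mem_erase] at hj
          exact hcon j hj.1.2 hj.1.1 hj.2
        have hzero : ∀ j ∈ (Finset.range m).erase j0, j ∉ K → c j = 0 := by
          intro j hj hjK
          by_contra hc
          exact hjK (by rw [hK]; exact Finset.mem_filter.mpr ⟨hj, hc⟩)
        have hsumK : ∑ j ∈ (Finset.range m).erase j0, c j = K.card * t := by
          rw [← Finset.sum_subset (Finset.filter_subset _ _) hzero]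
          rw [Finset.sum_congr rfl hKt, Finset.sum_const, nsmul_eq_mul]
        have hsplit : ∑ j ∈ Finset.range m, c j
            = c j0 + ∑ j ∈ (Finset.range m).erase j0, c j :=
          (Finset.add_sum_erase _ c hj0m).symm
        have hKN : K.card + 1 ≤ N := by
          by_contra hc
          push_neg at hc
          have : (N:ℝ) ≤ (K.card:ℝ) := by
            have : N ≤ K.card := by omega
            exact_mod_cast this
          rw [hsplit, hsumK] at hsum
          nlinarith
        have : ((K.card:ℝ) + 1) * t ≤ N * t := by
          have : ((K.card:ℝ) + 1) ≤ N := by exact_mod_cast hKN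
          nlinarith
        rw [hsplit, hsumK] at hslack
        push_neg at hslack
        nlinarith
      obtain ⟨j1, hj1m, hj10, hj1c⟩ := hex
      have hy0 : 0 < c j1 := (h0 j1).lt_of_ne (Ne.symm hj1c.1)
      have hy1 : c j1 < t := (h1 j1).lt_of_ne hj1c.2
      have hj1F : j1 ∈ F := Finset.mem_filter.mpr ⟨hj1m, hj1c⟩
      set x := c j0 with hxdef
      set y := c j1 with hydef
      set δ := min (t - x) y with hδ
      set δ' := min x (t - y) with hδ'
      have hδpos : 0 < δ := lt_min (by linarith) hy0
      have hδ'pos : 0 < δ' := lt_min hx0 (by linarith)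
      have hδle1 : δ ≤ t - x := min_le_left _ _
      have hδle2 : δ ≤ y := min_le_right _ _
      have hδ'le1 : δ' ≤ x := min_le_left _ _
      have hδ'le2 : δ' ≤ t - y := min_le_right _ _
      have hsumpos : 0 < δ + δ' := by linarith
      set lam := δ' / (δ + δ') with hlam
      have hl0 : 0 ≤ lam := div_nonneg hδ'pos.le hsumpos.le
      have hl1 : lam ≤ 1 := (div_le_one hsumpos).mpr (by linarith)
      set c₁ := Function.update (Function.update c j0 (x+δ)) j1 (y-δ) with hc₁
      set c₂ := Function.update (Function.update c j0 (x-δ')) j1 (y+δ') with hc₂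
      have hc₁j0 : c₁ j0 = x + δ := by
        rw [hc₁, Function.update_of_ne (Ne.symm hj10), Function.update_self]
      have hc₁j1 : c₁ j1 = y - δ := by rw [hc₁, Function.update_self]
      have hc₂j0 : c₂ j0 = x - δ' := by
        rw [hc₂, Function.update_of_ne (Ne.symm hj10), Function.update_self]
      have hc₂j1 : c₂ j1 = y + δ' := by rw [hc₂, Function.update_self]
      have hc₁other : ∀ j, j ≠ j0 → j ≠ j1 → c₁ j = c j := by
        intro j h00 h11
        rw [hc₁, Function.update_of_ne h11, Function.update_of_ne h00]
      have hc₂other : ∀ j, j ≠ j0 → j ≠ j1 → c₂ j = c j := by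
        intro j h00 h11
        rw [hc₂, Function.update_of_ne h11, Function.update_of_ne h00]
      have hconv : ∀ j, c j = lam * c₁ j + (1-lam) * c₂ j := by
        intro j
        by_cases hjj1 : j = j1
        · subst hjj1
          rw [hc₁j1, hc₂j1, hlam, ← hydef]
          field_simp
          ring
        · by_cases hjj0 : j = j0
          · subst hjj0
            rw [hc₁j0, hc₂j0, hlam, ← hxdef]
            field_simp
            ring
          · rw [hc₁other j hjj0 hjj1, hc₂other j hjj0 hjj1]
            ring
      apply combine c₁ c₂ lam hl0 hl1 hconv
      · apply ih c₁
        · -- card bound for c₁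
          rcases le_total (t - x) y with hmin | hmin
          · apply cardle c₁ j0 hj0F
            · intro j hj hc
              by_cases hjj1 : j = j1
              · subst hjj1; exact hj1c
              · rwa [hc₁other j hj hjj1] at hc
            · right; rw [hc₁j0, hδ, min_eq_left hmin]; ring
          · apply cardle c₁ j1 hj1F
            · intro j hj hc
              by_cases hjj0 : j = j0
              · subst hjj0; exact hj0c
              · rwa [hc₁other j hjj0 hj] at hc
            · left; rw [hc₁j1, hδ, min_eq_right hmin]; ring
        · intro j
          by_cases hjj1 : j = j1
          · subst hjj1; rw [hc₁j1]; linarith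
          · by_cases hjj0 : j = j0
            · subst hjj0; rw [hc₁j0]; linarith
            · rw [hc₁other j hjj0 hjj1]; exact h0 j
        · intro j
          by_cases hjj1 : j = j1
          · subst hjj1; rw [hc₁j1]; linarith
          · by_cases hjj0 : j = j0
            · subst hjj0; rw [hc₁j0]; linarith
            · rw [hc₁other j hjj0 hjj1]; exact h1 j
        · rw [hc₁, sum_update_two (Ne.symm hj10) hj0m hj1m, ← hxdef, ← hydef]
          linarith
      · apply ih c₂
        · rcases le_total x (t - y) with hmin | hmin
          · apply cardle c₂ j0 hj0F
            · intro j hj hc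
              by_cases hjj1 : j = j1
              · subst hjj1; exact hj1c
              · rwa [hc₂other j hj hjj1] at hc
            · left; rw [hc₂j0, hδ', min_eq_left hmin]; ring
          · apply cardle c₂ j1 hj1F
            · intro j hj hc
              by_cases hjj0 : j = j0
              · subst hjj0; exact hj0c
              · rwa [hc₂other j hjj0 hj] at hc
            · right; rw [hc₂j1, hδ', min_eq_right hmin]; ring
        · intro j
          by_cases hjj1 : j = j1
          · subst hjj1; rw [hc₂j1]; linarith
          · by_cases hjj0 : j = j0
            · subst hjj0; rw [hc₂j0]; linarith
            · rw [hc₂other j hjj0 hjj1]; exact h0 j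
        · intro j
          by_cases hjj1 : j = j1
          · subst hjj1; rw [hc₂j1]; linarith
          · by_cases hjj0 : j = j0
            · subst hjj0; rw [hc₂j0]; linarith
            · rw [hc₂other j hjj0 hjj1]; exact h1 j
        · rw [hc₂, sum_update_two (Ne.symm hj10) hj0m hj1m, ← hxdef, ← hydef]
          linarith
end Sym

-- New: total length bound
lemma sum_len_le_one {m : ℕ} (a b : Fin m → ℝ)
    (hcond : ∀ j, 0 ≤ a j ∧ a j < b j ∧ b j ≤ 1)
    (hdisj : Pairwise fun i j => Disjoint (Set.Ioo (a i) (b i)) (Set.Ioo (a j) (b j))) :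
    ∑ j : Fin m, (b j - a j) ≤ 1 := by
  have hmeas : volume (⋃ j, Set.Ioo (a j) (b j)) = ∑' j, volume (Set.Ioo (a j) (b j)) :=
    measure_iUnion hdisj (fun j => measurableSet_Ioo)
  have hsub : (⋃ j, Set.Ioo (a j) (b j)) ⊆ Set.Icc (0:ℝ) 1 := by
    intro x hx
    obtain ⟨j, hj⟩ := Set.mem_iUnion.mp hx
    obtain ⟨h1, h2, h3⟩ := hcond j
    exact ⟨by linarith [hj.1], by linarith [hj.2]⟩
  have hle : ∑' j, volume (Set.Ioo (a j) (b j)) ≤ 1 := by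
    rw [← hmeas]
    calc volume (⋃ j, Set.Ioo (a j) (b j)) ≤ volume (Set.Icc (0:ℝ) 1) :=
        measure_mono hsub
      _ = 1 := by rw [Real.volume_Icc]; norm_num
  rw [tsum_fintype] at hle
  have heq : ∀ j : Fin m, volume (Set.Ioo (a j) (b j)) = ENNReal.ofReal (b j - a j) :=
    fun j => Real.volume_Ioo
  rw [Finset.sum_congr rfl (fun j _ => heq j)] at hle
  have := ENNReal.toReal_mono (by norm_num) hle
  rw [ENNReal.toReal_sum (fun j _ => ENNReal.ofReal_ne_top)] at this
  simp only [ENNReal.toReal_one] at this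
  calc ∑ j : Fin m, (b j - a j)
      = ∑ j : Fin m, (ENNReal.ofReal (b j - a j)).toReal := by
        apply Finset.sum_congr rfl
        intro j _
        rw [ENNReal.toReal_ofReal (by linarith [(hcond j).2.1])]
    _ ≤ 1 := this

lemma upper_bound {X : Type*} [NormedAddCommGroup X] [NormedSpace ℝ X] {e : ℕ → X}
    (he : IsSymmetricBasis e) (n m : ℕ) (a b : Fin m → ℝ)
    (hcond : ∀ j, 0 ≤ a j ∧ a j < b j ∧ b j ≤ 1)
    (hdisj : Pairwise fun i j => Disjoint (Set.Ioo (a i) (b i)) (Set.Ioo (a j) (b j))) :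
    ‖∑ j : Fin m, (∫ x in Set.Ioo (a j) (b j), rademacher n x) • e (j:ℕ)‖
      ≤ ((2:ℝ)^n)⁻¹ * ‖∑ i ∈ Finset.range (2^n), e i‖ := by
  classical
  set t : ℝ := ((2:ℝ)^n)⁻¹ with htdef
  have ht : 0 < t := by rw [htdef]; positivity
  set A : ℕ → ℝ := fun j => if h : j < m then a ⟨j,h⟩ else 0 with hA
  set B : ℕ → ℝ := fun j => if h : j < m then b ⟨j,h⟩ else 0 with hB
  set c : ℕ → ℝ := fun j => ∫ x in Set.Ioo (A j) (B j), rademacher n x with hc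
  have hj_lt : ∀ j, j < m → 0 ≤ A j ∧ A j ≤ B j ∧ B j ≤ 1 := by
    intro j h
    rw [hA, hB]
    simp only [dif_pos h]
    exact ⟨(hcond ⟨j,h⟩).1, le_of_lt (hcond ⟨j,h⟩).2.1, (hcond ⟨j,h⟩).2.2⟩
  have hczero : ∀ j, ¬ j < m → c j = 0 := by
    intro j h
    rw [hc]
    simp only [hA, hB, dif_neg h]
    rw [Set.Ioo_self]
    simp
  have hcabs : ∀ j, |c j| ≤ t := by
    intro j
    by_cases h : j < m
    · obtain ⟨h1, h2, h3⟩ := hj_lt j h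
      rw [hc]
      simp only []
      rw [integral_rademacher n _ _ h2]
      exact altsum_bound n (A j) (B j) h1 h2 h3
    · rw [hczero j h]
      simp [ht.le]
  have hlen : ∀ j, j < m → |c j| ≤ B j - A j := by
    intro j h
    obtain ⟨h1, h2, h3⟩ := hj_lt j h
    rw [hc]
    simp only []
    rw [integral_rademacher n _ _ h2]
    exact altsum_le_len n (A j) (B j) h1 h2 h3
  have hre : ∑ j : Fin m, (∫ x in Set.Ioo (a j) (b j), rademacher n x) • e (j:ℕ)
      = ∑ j ∈ Finset.range m, c j • e j := by
    rw [← Fin.sum_univ_eq_sum_range (fun j => c j • e j) m]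
    apply Finset.sum_congr rfl
    intro j _
    congr 1
    rw [hc]
    simp only [hA, hB, dif_pos j.isLt, Fin.eta]
  have hsum1 : ∑ j ∈ Finset.range m, |c j| ≤ 1 := by
    calc ∑ j ∈ Finset.range m, |c j|
        ≤ ∑ j ∈ Finset.range m, (B j - A j) :=
        Finset.sum_le_sum (fun j hj => hlen j (Finset.mem_range.mp hj))
      _ = ∑ j : Fin m, (b j - a j) := by
          rw [← Fin.sum_univ_eq_sum_range (fun j => B j - A j) m]
          apply Finset.sum_congr rfl
          intro j _
          rw [hA, hB]
          simp only [dif_pos j.isLt, Fin.eta]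
      _ ≤ 1 := sum_len_le_one a b hcond hdisj
  have hone : (1:ℝ) = ((2^n : ℕ):ℝ) * t := by
    rw [htdef]
    push_cast
    rw [mul_inv_cancel₀ (by positivity)]
  rw [hre, sym_abs he m c]
  apply keyD he (2^n) m t ht m (fun j => |c j|)
  · calc ((Finset.range m).filter _).card ≤ (Finset.range m).card :=
        Finset.card_filter_le _ _
      _ = m := Finset.card_range m
  · intro j; exact abs_nonneg _
  · intro j; exact hcabs j
  · rw [← hone]; exact hsum1

lemma dyadic_value {X : Type*} [NormedAddCommGroup X] [NormedSpace ℝ X] {e : ℕ → X}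
    (he : IsSymmetricBasis e) (n : ℕ) :
    ‖∑ j : Fin (2^n), (∫ x in Set.Ioo (((j:ℕ):ℝ)/2^n) ((((j:ℕ):ℝ)+1)/2^n),
        rademacher n x) • e (j:ℕ)‖
      = ((2:ℝ)^n)⁻¹ * ‖∑ i ∈ Finset.range (2^n), e i‖ := by
  set t : ℝ := ((2:ℝ)^n)⁻¹ with htdef
  have ht : 0 < t := by rw [htdef]; positivity
  have h1 : ∑ j : Fin (2^n), (∫ x in Set.Ioo (((j:ℕ):ℝ)/2^n) ((((j:ℕ):ℝ)+1)/2^n),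
      rademacher n x) • e (j:ℕ)
      = ∑ j ∈ Finset.range (2^n), ((-1:ℝ)^j * t) • e j := by
    rw [← Fin.sum_univ_eq_sum_range (fun j => ((-1:ℝ)^j * t) • e j) (2^n)]
    apply Finset.sum_congr rfl
    intro j _
    rw [integral_rademacher_dyadic n (j:ℕ) j.isLt, htdef]
  rw [h1]
  have h2 : ‖∑ j ∈ Finset.range (2^n), ((-1:ℝ)^j * t) • e j‖
      = ‖∑ j ∈ Finset.range (2^n), t • e j‖ := by
    apply sym_sign he (2^n) (fun _ => t) (fun j => (-1:ℝ)^j)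
    intro j
    rcases Nat.even_or_odd j with h | h
    · left; exact h.neg_one_pow
    · right; exact h.neg_one_pow
  rw [h2, ← Finset.smul_sum, norm_smul, Real.norm_eq_abs, abs_of_pos ht]


end JFaux

/-- For the `n`-th Rademacher function `r_n`,
`‖r_n‖_{JF_X} = 2^{-n} ‖Σ_{i=1}^{2^n} e_i‖_X`. -/
theorem JFX_norm_rademacher
    {X : Type*} [NormedAddCommGroup X] [NormedSpace ℝ X]
    (e : ℕ → X) (he : IsSymmetricBasis e) (n : ℕ) :
    JFNorm1 e (rademacher n) = ((2 : ℝ) ^ n)⁻¹ * ‖∑ i ∈ Finset.range (2 ^ n), e i‖ := by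
  classical
  set bound : ℝ := ((2 : ℝ) ^ n)⁻¹ * ‖∑ i ∈ Finset.range (2 ^ n), e i‖ with hbound
  have hT : (0:ℝ) < (2:ℝ)^n := by positivity
  set a : Fin (2^n) → ℝ := fun j => ((j:ℕ):ℝ)/2^n with ha
  set b : Fin (2^n) → ℝ := fun j => (((j:ℕ):ℝ)+1)/2^n with hb
  have hcond : ∀ j, 0 ≤ a j ∧ a j < b j ∧ b j ≤ 1 := by
    intro j
    refine ⟨by rw [ha]; positivity, ?_, ?_⟩
    · rw [ha, hb]
      exact (div_lt_div_iff_of_pos_right hT).mpr (by linarith)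
    · rw [hb, div_le_one hT]
      have : (j:ℕ) + 1 ≤ 2^n := Nat.succ_le_of_lt j.isLt
      have h2 : ((j:ℕ):ℝ) + 1 ≤ ((2^n : ℕ):ℝ) := by exact_mod_cast this
      calc ((j:ℕ):ℝ) + 1 ≤ ((2^n : ℕ):ℝ) := h2
        _ = (2:ℝ)^n := by push_cast; ring
  have hdisj : Pairwise fun i j => Disjoint (Set.Ioo (a i) (b i)) (Set.Ioo (a j) (b j)) := by
    intro i j hij
    rw [Set.Ioo_disjoint_Ioo]
    have key : ∀ i j : Fin (2^n), i < j → min (b i) (b j) ≤ max (a i) (a j) := by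
      intro i j h
      have hc : ((i:ℕ):ℝ) + 1 ≤ ((j:ℕ):ℝ) := by exact_mod_cast Nat.succ_le_of_lt h
      have hba : b i ≤ a j := by
        rw [ha, hb, div_le_div_iff₀ hT hT]
        nlinarith
      exact le_trans (min_le_left _ _) (le_trans hba (le_max_right _ _))
    rcases lt_or_gt_of_ne hij with h | h
    · exact key i j h
    · rw [min_comm, max_comm]
      exact key j i h
  have hub : ∀ r ∈ { r | ∃ (m : ℕ) (a b : Fin m → ℝ),
      (∀ j, 0 ≤ a j ∧ a j < b j ∧ b j ≤ 1) ∧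
      (Pairwise fun i j => Disjoint (Set.Ioo (a i) (b i)) (Set.Ioo (a j) (b j))) ∧
      r = ‖∑ j : Fin m, (∫ x in Set.Ioo (a j) (b j), rademacher n x) • e (j : ℕ)‖ },
      r ≤ bound := by
    rintro r ⟨m, a', b', hcond', hdisj', rfl⟩
    exact JFaux.upper_bound he n m a' b' hcond' hdisj'
  have hmem : bound ∈ { r | ∃ (m : ℕ) (a b : Fin m → ℝ),
      (∀ j, 0 ≤ a j ∧ a j < b j ∧ b j ≤ 1) ∧
      (Pairwise fun i j => Disjoint (Set.Ioo (a i) (b i)) (Set.Ioo (a j) (b j))) ∧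
      r = ‖∑ j : Fin m, (∫ x in Set.Ioo (a j) (b j), rademacher n x) • e (j : ℕ)‖ } := by
    exact ⟨2^n, a, b, hcond, hdisj, (JFaux.dyadic_value he n).symm⟩
  rw [JFNorm1]
  exact le_antisymm (csSup_le ⟨bound, hmem⟩ hub) (le_csSup ⟨bound, hub⟩ hmem)


end
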